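/- arXiv:2010.09020 — 2 statements merged into one kernel-verified Lean document; each statement's English description precedes it below -/
import Mathlib

section
/- Let $\mu$ be a finite measure on a star body $D$ in $\mathbb{R}^n$ with density $g$ satisfying $0 \le g \le 1$, and let $0 < p < n$. Then $\left(\frac{\int_D \|x\|_D^{-p} g(x)\,dx}{\int_D \|x\|_D^{-p}\,dx}\right)^{1/(n-p)} \le \left(\frac{\int_D g(x)\,dx}{|D|}\right)^{1/n}$. -/
open MeasureTheory Set Metric Real
open scoped Real
open scoped Pointwise ENNReal

noncomputable section

abbrev Euc (n : ℕ) := EuclideanSpace ℝ (Fin n)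

/-- A star body: compact, origin interior, continuous Minkowski functional (gauge),
and `K` is the unit ball of its gauge. -/
def IsStarBody {n : ℕ} (K : Set (Euc n)) : Prop :=
  IsCompact K ∧ 0 ∈ interior K ∧ Continuous (gauge K) ∧ K = {x | gauge K x ≤ 1}

namespace MilmanPajorAux

variable {n : ℕ}

lemma smul_eq_sublevel (D : Set (Euc n)) (hset : D = {x | gauge D x ≤ 1})
    {t : ℝ} (ht : 0 < t) : t • D = {x | gauge D x ≤ t} := by
  ext x
  rw [Set.mem_smul_set_iff_inv_smul_mem₀ ht.ne']
  have hg : gauge D (t⁻¹ • x) = t⁻¹ * gauge D x := by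
    rw [gauge_smul_of_nonneg (inv_nonneg.2 ht.le)]; rfl
  constructor
  · intro hx
    have h1 : gauge D (t⁻¹ • x) ≤ 1 := by
      have := hx; rw [hset] at this; exact this
    rw [hg] at h1
    have := mul_le_mul_of_nonneg_left h1 ht.le
    rw [mul_one] at this
    calc gauge D x = t * (t⁻¹ * gauge D x) := by field_simp
    _ ≤ t := this
  · intro hx
    have h1 : t⁻¹ * gauge D x ≤ 1 := by
      have := mul_le_mul_of_nonneg_left hx (inv_nonneg.2 ht.le)
      rwa [inv_mul_cancel₀ ht.ne'] at this
    rw [hset]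
    simpa [hg] using h1

lemma measurable_gauge_rpow (D : Set (Euc n)) (hcont : Continuous (gauge D))
    {p : ℝ} (hp0 : 0 < p) : Measurable (fun x => gauge D x ^ (-p)) := by
  have : (fun x => gauge D x ^ (-p)) = fun x => (gauge D x ^ p)⁻¹ := by
    funext x; rw [Real.rpow_neg (gauge_nonneg _)]
  rw [this]
  exact (((Real.continuous_rpow_const hp0.le).comp hcont).measurable).inv

lemma integrableOn_gauge_rpow (hn : 1 ≤ n) (D : Set (Euc n)) (hcomp : IsCompact D)
    (hint : 0 ∈ interior D) (hcont : Continuous (gauge D)) (hset : D = {x | gauge D x ≤ 1})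
    {p : ℝ} (hp0 : 0 < p) (hpn : p < n) :
    IntegrableOn (fun x => gauge D x ^ (-p)) D := by
  haveI : Nonempty (Fin n) := ⟨⟨0, hn⟩⟩
  have habs : Absorbent ℝ D := absorbent_nhds_zero (mem_interior_iff_mem_nhds.1 hint)
  have hbdd : Bornology.IsVonNBounded ℝ D :=
    NormedSpace.isVonNBounded_of_isBounded ℝ hcomp.isBounded
  have hfm : Measurable (fun x => gauge D x ^ (-p)) := measurable_gauge_rpow D hcont hp0
  refine ⟨hfm.aestronglyMeasurable, ?_⟩
  rw [hasFiniteIntegral_iff_ofReal (ae_of_all _ fun x => Real.rpow_nonneg (gauge_nonneg _) _)]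
  -- dyadic shells
  set c : ℕ → ℝ := fun k => (2:ℝ) ^ (-(k:ℝ)) with hc
  have hcpos : ∀ k, 0 < c k := fun k => Real.rpow_pos_of_pos two_pos _
  set A : ℕ → Set (Euc n) := fun k => {x | gauge D x ≤ c k} with hA
  have hAmeas : ∀ k, MeasurableSet (A k) :=
    fun k => (isClosed_le hcont continuous_const).measurableSet
  have hAvol : ∀ k, volume (A k) = ENNReal.ofReal ((c k) ^ (n:ℕ)) * volume D := by
    intro k
    simp only [hA]
    rw [← smul_eq_sublevel D hset (hcpos k), Measure.addHaar_smul, finrank_euclideanSpace_fin,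
      abs_of_nonneg (pow_nonneg (hcpos k).le _)]
  set C : ℕ → Set (Euc n) := fun k => A k \ A (k+1) with hC
  have hDsub : D ⊆ ({0} : Set (Euc n)) ∪ ⋃ k, C k := by
    intro x hx
    by_cases hx0 : x = 0
    · exact Or.inl (by simp [hx0])
    · right
      have hgxpos : 0 < gauge D x := (gauge_pos habs hbdd).2 hx0
      have hgx1 : gauge D x ≤ 1 := by rw [hset] at hx; exact hx
      have hex : ∃ m : ℕ, c (m+1) < gauge D x := by
        obtain ⟨m, hm⟩ := exists_pow_lt_of_lt_one hgxpos (by norm_num : (2:ℝ)⁻¹ < 1)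
        refine ⟨m, lt_of_le_of_lt ?_ hm⟩
        have : c (m+1) = (2:ℝ)⁻¹ ^ (m+1) := by
          rw [hc, ← Real.rpow_natCast ((2:ℝ)⁻¹) (m+1),
            ← Real.rpow_neg_one (2:ℝ), ← Real.rpow_mul (by norm_num)]
          norm_num
        rw [this]
        calc (2:ℝ)⁻¹ ^ (m+1) ≤ (2:ℝ)⁻¹ ^ m := by
              apply pow_le_pow_of_le_one (by norm_num) (by norm_num)
              omega
        _ = (2:ℝ)⁻¹ ^ m := rfl
      classical
      obtain ⟨k, hk1, hk2⟩ : ∃ k, c (k+1) < gauge D x ∧ gauge D x ≤ c k := by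
        refine ⟨Nat.find hex, Nat.find_spec hex, ?_⟩
        rcases Nat.eq_zero_or_pos (Nat.find hex) with h0 | h0
        · rw [h0]; simpa [hc] using hgx1
        · have hmin := Nat.find_min hex (m := Nat.find hex - 1) (by omega)
          rw [not_lt] at hmin
          have heq : Nat.find hex - 1 + 1 = Nat.find hex := by omega
          rwa [heq] at hmin
      exact mem_iUnion.2 ⟨k, hk2, fun h => absurd h (not_le.2 hk1)⟩
  calc ∫⁻ x in D, ENNReal.ofReal (gauge D x ^ (-p))
      ≤ ∫⁻ x in ({0} : Set (Euc n)) ∪ ⋃ k, C k, ENNReal.ofReal (gauge D x ^ (-p)) :=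
        lintegral_mono_set hDsub
    _ ≤ (∫⁻ x in ({0} : Set (Euc n)), ENNReal.ofReal (gauge D x ^ (-p)))
        + ∫⁻ x in ⋃ k, C k, ENNReal.ofReal (gauge D x ^ (-p)) := lintegral_union_le _ _ _
    _ ≤ 0 + ∑' k, ∫⁻ x in C k, ENNReal.ofReal (gauge D x ^ (-p)) := by
        gcongr
        · rw [setLIntegral_measure_zero _ _ (measure_singleton _)]
        · exact lintegral_iUnion_le _ _
    _ = ∑' k, ∫⁻ x in C k, ENNReal.ofReal (gauge D x ^ (-p)) := zero_add _
    _ ≤ ∑' k, ENNReal.ofReal ((2:ℝ)^p) * ENNReal.ofReal ((2:ℝ)^(p - (n:ℝ))) ^ k * volume D := by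
        apply ENNReal.tsum_le_tsum
        intro k
        have hCsub : C k ⊆ A k := diff_subset
        have hstep : ∫⁻ x in C k, ENNReal.ofReal (gauge D x ^ (-p))
            ≤ ENNReal.ofReal ((c (k+1)) ^ (-p)) * volume (A k) := by
          calc ∫⁻ x in C k, ENNReal.ofReal (gauge D x ^ (-p))
              ≤ ∫⁻ _x in C k, ENNReal.ofReal ((c (k+1)) ^ (-p)) := by
                apply setLIntegral_mono' ((hAmeas k).diff (hAmeas (k+1)))
                intro x hx
                apply ENNReal.ofReal_le_ofReal
                exact Real.rpow_le_rpow_of_nonpos (hcpos (k+1))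
                  (not_le.1 (fun h => hx.2 h)).le (neg_nonpos.2 hp0.le)
            _ = ENNReal.ofReal ((c (k+1)) ^ (-p)) * volume (C k) := setLIntegral_const _ _
            _ ≤ ENNReal.ofReal ((c (k+1)) ^ (-p)) * volume (A k) :=
                mul_le_mul_right (measure_mono hCsub) _
        rw [hAvol k] at hstep
        refine hstep.trans (le_of_eq ?_)
        have key : (c (k+1)) ^ (-p) * (c k) ^ (n:ℕ) = (2:ℝ)^p * ((2:ℝ)^(p - (n:ℝ)))^k := by
          simp only [hc]
          rw [← Real.rpow_natCast ((2:ℝ) ^ (-((k:ℕ):ℝ))) n,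
            ← Real.rpow_natCast ((2:ℝ)^(p - (n:ℝ))) k,
            ← Real.rpow_mul (by norm_num : (0:ℝ) ≤ 2),
            ← Real.rpow_mul (by norm_num : (0:ℝ) ≤ 2),
            ← Real.rpow_mul (by norm_num : (0:ℝ) ≤ 2),
            ← Real.rpow_add (by norm_num : (0:ℝ) < 2),
            ← Real.rpow_add (by norm_num : (0:ℝ) < 2)]
          congr 1
          push_cast
          ring
        rw [← mul_assoc, ← ENNReal.ofReal_mul (Real.rpow_nonneg (hcpos (k+1)).le _), key,
          ENNReal.ofReal_mul (by positivity), ENNReal.ofReal_pow (by positivity)]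
    _ < ⊤ := by
        rw [ENNReal.tsum_mul_right, ENNReal.tsum_mul_left, ENNReal.tsum_geometric]
        have hr1 : ENNReal.ofReal ((2:ℝ)^(p - (n:ℝ))) < 1 := by
          rw [← ENNReal.ofReal_one]
          apply ENNReal.ofReal_lt_ofReal_iff_of_nonneg (by positivity) |>.2
          exact Real.rpow_lt_one_of_one_lt_of_neg one_lt_two (by linarith)
        apply ENNReal.mul_lt_top
        · apply ENNReal.mul_lt_top ENNReal.ofReal_lt_top
          exact ENNReal.inv_lt_top.2 (tsub_pos_of_lt hr1)
        · exact hcomp.measure_lt_top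

end MilmanPajorAux

set_option maxHeartbeats 1000000 in
/-- Milman–Pajor lemma: for a star body `D`, a measurable density `0 ≤ g ≤ 1` on `D`,
and `0 < p < n`,
`((∫_D ‖x‖_D^{-p} g)/(∫_D ‖x‖_D^{-p}))^(1/(n-p)) ≤ ((∫_D g)/|D|)^(1/n)`. -/
theorem stmt_9 (n : ℕ) (hn : 1 ≤ n) (D : Set (Euc n)) (hD : IsStarBody D)
    (p : ℝ) (hp0 : 0 < p) (hpn : p < n) (g : Euc n → ℝ) (hgm : Measurable g)
    (hg0 : ∀ x ∈ D, 0 ≤ g x) (hg1 : ∀ x ∈ D, g x ≤ 1) :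
    ((∫ x in D, gauge D x ^ (-p) * g x) / (∫ x in D, gauge D x ^ (-p)))
        ^ (1 / ((n : ℝ) - p)) ≤
      ((∫ x in D, g x) / (volume D).toReal) ^ (1 / (n : ℝ)) := by
  obtain ⟨hcomp, hint, hcont, hset⟩ := hD
  haveI : Nonempty (Fin n) := ⟨⟨0, hn⟩⟩
  have hnR : (1:ℝ) ≤ (n:ℝ) := by exact_mod_cast hn
  have hnp : (0:ℝ) < (n:ℝ) - p := sub_pos.2 hpn
  have habs : Absorbent ℝ D := absorbent_nhds_zero (mem_interior_iff_mem_nhds.1 hint)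
  have hbdd : Bornology.IsVonNBounded ℝ D :=
    NormedSpace.isVonNBounded_of_isBounded ℝ hcomp.isBounded
  have hDmeas : MeasurableSet D := hcomp.isClosed.measurableSet
  have hVtop : volume D ≠ ⊤ := hcomp.measure_lt_top.ne
  have hV0 : (0:ℝ≥0∞) < volume D :=
    Measure.measure_pos_of_nonempty_interior volume ⟨0, hint⟩
  have hVpos : 0 < (volume D).toReal := ENNReal.toReal_pos hV0.ne' hVtop
  have hintI : IntegrableOn (fun x => gauge D x ^ (-p)) D :=
    MilmanPajorAux.integrableOn_gauge_rpow hn D hcomp hint hcont hset hp0 hpn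
  have hfm : Measurable (fun x => gauge D x ^ (-p)) :=
    MilmanPajorAux.measurable_gauge_rpow D hcont hp0
  have hf_nonneg : ∀ x : Euc n, 0 ≤ gauge D x ^ (-p) :=
    fun x => Real.rpow_nonneg (gauge_nonneg _) _
  have hne0 : ∀ᵐ x ∂(volume.restrict D), x ≠ (0 : Euc n) := by
    refine ae_restrict_of_ae ?_
    rw [ae_iff]
    have h1 : {a : Euc n | ¬ a ≠ 0} = {(0 : Euc n)} := by ext a; simp
    rw [h1]
    exact measure_singleton _
  have hgbdd : ∀ᵐ x ∂(volume.restrict D), ‖g x‖ ≤ 1 := by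
    filter_upwards [ae_restrict_mem hDmeas] with x hx
    rw [Real.norm_eq_abs, abs_le]
    exact ⟨by linarith [hg0 x hx], hg1 x hx⟩
  have hgint : IntegrableOn g D :=
    Measure.integrableOn_of_bounded hVtop hgm.aestronglyMeasurable hgbdd
  have hA0 : 0 ≤ ∫ x in D, g x := setIntegral_nonneg hDmeas hg0
  have hJ0 : 0 ≤ ∫ x in D, gauge D x ^ (-p) * g x :=
    setIntegral_nonneg hDmeas fun x hx => mul_nonneg (hf_nonneg x) (hg0 x hx)
  have hI_lb : (volume D).toReal ≤ ∫ x in D, gauge D x ^ (-p) := by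
    have h1 : ∫ _x in D, (1:ℝ) ≤ ∫ x in D, gauge D x ^ (-p) := by
      apply integral_mono_ae (integrableOn_const (C := (1:ℝ)) hVtop) hintI
      filter_upwards [ae_restrict_mem hDmeas, hne0] with x hx hx0
      have hgx1 : gauge D x ≤ 1 := by rw [hset] at hx; exact hx
      exact Real.one_le_rpow_of_pos_of_le_one_of_nonpos
        ((gauge_pos habs hbdd).2 hx0) hgx1 (neg_nonpos.2 hp0.le)
    simpa [setIntegral_const, smul_eq_mul, measureReal_def] using h1
  have hIpos : 0 < ∫ x in D, gauge D x ^ (-p) := lt_of_lt_of_le hVpos hI_lb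
  rcases hA0.eq_or_lt with hA | hA
  · -- degenerate case : ∫ g = 0
    have hg0' : g =ᵐ[volume.restrict D] 0 :=
      (integral_eq_zero_iff_of_nonneg_ae
        (by filter_upwards [ae_restrict_mem hDmeas] with x hx using hg0 x hx) hgint).1 hA.symm
    have hJ : ∫ x in D, gauge D x ^ (-p) * g x = 0 := by
      rw [show (∫ x in D, gauge D x ^ (-p) * g x) = ∫ _x in D, (0:ℝ) from
        integral_congr_ae (by filter_upwards [hg0'] with x hx; simp [hx]), integral_zero]
    rw [hJ, ← hA, zero_div, zero_div,
      Real.zero_rpow (one_div_ne_zero hnp.ne'),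
      Real.zero_rpow (one_div_ne_zero (by positivity))]
  · -- main case
    set t : ℝ := ((∫ x in D, g x) / (volume D).toReal) ^ (1/(n:ℝ)) with htdef
    have htpos : 0 < t := Real.rpow_pos_of_pos (div_pos hA hVpos) _
    have hAV : (∫ x in D, g x) ≤ (volume D).toReal := by
      have h1 : (∫ x in D, g x) ≤ ∫ _x in D, (1:ℝ) :=
        setIntegral_mono_on hgint (integrableOn_const hVtop) hDmeas hg1
      simpa [setIntegral_const, smul_eq_mul, measureReal_def] using h1
    have ht1 : t ≤ 1 :=
      Real.rpow_le_one (div_nonneg hA0 hVpos.le) ((div_le_one hVpos).2 hAV) (by positivity)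
    have htn : t ^ ((n:ℝ)) = (∫ x in D, g x) / (volume D).toReal := by
      rw [htdef, ← Real.rpow_mul (div_nonneg hA0 hVpos.le),
        one_div_mul_cancel (by positivity : (n:ℝ) ≠ 0), Real.rpow_one]
    clear_value t
    have hTD : t • D = {x | gauge D x ≤ t} := MilmanPajorAux.smul_eq_sublevel D hset htpos
    have hTsub : t • D ⊆ D := by
      rw [hTD]
      conv_rhs => rw [hset]
      exact fun x hx => le_trans hx ht1
    have hTmeas : MeasurableSet (t • D) := by
      rw [hTD]; exact (isClosed_le hcont continuous_const).measurableSet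
    have hvolT : (volume (t • D)).toReal = ∫ x in D, g x := by
      rw [Measure.addHaar_smul, finrank_euclideanSpace_fin, ENNReal.toReal_mul,
        ENNReal.toReal_ofReal (abs_nonneg _), abs_of_nonneg (pow_nonneg htpos.le _),
        ← Real.rpow_natCast t n, htn]
      field_simp
    have hscale : ∫ x in t • D, gauge D x ^ (-p)
        = t ^ ((n:ℝ) - p) * ∫ x in D, gauge D x ^ (-p) := by
      have h1 := Measure.setIntegral_comp_smul_of_pos volume
        (fun x => gauge D x ^ (-p)) D htpos
      have h2 : ∀ x : Euc n, gauge D (t • x) ^ (-p) = t^(-p) * gauge D x ^ (-p) := by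
        intro x
        rw [gauge_smul_of_nonneg htpos.le, smul_eq_mul,
          Real.mul_rpow htpos.le (gauge_nonneg _)]
      simp only [h2, finrank_euclideanSpace_fin, smul_eq_mul] at h1
      rw [integral_const_mul] at h1
      have h3 : (t ^ n : ℝ) ≠ 0 := by positivity
      have h4 : ∫ x in t • D, gauge D x ^ (-p)
          = t ^ n * (t^(-p) * ∫ x in D, gauge D x ^ (-p)) := by
        rw [h1]; field_simp
      rw [h4, ← Real.rpow_natCast t n,
        show ((n:ℝ) - p) = (n:ℝ) + (-p) from by ring, Real.rpow_add htpos]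
      ring
    -- pointwise comparison
    have hptwise : ∀ᵐ x ∂(volume.restrict D),
        gauge D x ^ (-p) * g x ≤ (t • D).indicator (fun y => gauge D y ^ (-p)) x
          + t^(-p) * (g x - (t • D).indicator (fun _ => (1:ℝ)) x) := by
      filter_upwards [ae_restrict_mem hDmeas, hne0] with x hx hx0
      by_cases hxt : x ∈ t • D
      · rw [indicator_of_mem hxt, indicator_of_mem hxt]
        have h1 : t^(-p) ≤ gauge D x ^ (-p) := by
          refine Real.rpow_le_rpow_of_nonpos ((gauge_pos habs hbdd).2 hx0) ?_
            (neg_nonpos.2 hp0.le)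
          rw [hTD] at hxt; exact hxt
        nlinarith [mul_nonneg (sub_nonneg.2 h1) (sub_nonneg.2 (hg1 x hx))]
      · rw [indicator_of_notMem hxt, indicator_of_notMem hxt]
        have h1 : gauge D x ^ (-p) ≤ t^(-p) := by
          refine Real.rpow_le_rpow_of_nonpos htpos ?_ (neg_nonpos.2 hp0.le)
          rw [hTD] at hxt
          exact le_of_lt (not_le.1 hxt)
        linarith [mul_le_mul_of_nonneg_right h1 (hg0 x hx)]
    have hind_f_int : Integrable ((t • D).indicator (fun y => gauge D y ^ (-p)))
        (volume.restrict D) :=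
      ((integrable_indicator_iff hTmeas).2 (hintI.mono_set hTsub)).integrableOn
    have hind_1_int : Integrable ((t • D).indicator (fun _ => (1:ℝ)))
        (volume.restrict D) :=
      ((integrable_indicator_iff hTmeas).2 (integrableOn_const
        ((measure_mono hTsub).trans_lt hVtop.lt_top).ne)).integrableOn
    have hfg_int : IntegrableOn (fun x => gauge D x ^ (-p) * g x) D := by
      apply hintI.mono' ((hfm.mul hgm).aestronglyMeasurable)
      filter_upwards [ae_restrict_mem hDmeas] with x hx
      rw [Real.norm_eq_abs, Pi.mul_apply, abs_mul, abs_of_nonneg (hf_nonneg x)]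
      calc gauge D x ^ (-p) * |g x| ≤ gauge D x ^ (-p) * 1 := by
            apply mul_le_mul_of_nonneg_left _ (hf_nonneg x)
            rw [abs_le]; exact ⟨by linarith [hg0 x hx], hg1 x hx⟩
      _ = gauge D x ^ (-p) := mul_one _
    have hsub_int : Integrable (fun x => g x - (t • D).indicator (fun _ => (1:ℝ)) x)
        (volume.restrict D) := hgint.sub hind_1_int
    have hrest_int : Integrable
        (fun x => t^(-p) * (g x - (t • D).indicator (fun _ => (1:ℝ)) x))
        (volume.restrict D) := hsub_int.const_mul _
    have hsum_int : Integrable (fun x => (t • D).indicator (fun y => gauge D y ^ (-p)) x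
        + t^(-p) * (g x - (t • D).indicator (fun _ => (1:ℝ)) x)) (volume.restrict D) :=
      hind_f_int.add hrest_int
    have hkey : ∫ x in D, gauge D x ^ (-p) * g x
        ≤ t ^ ((n:ℝ)-p) * ∫ x in D, gauge D x ^ (-p) := by
      have h2 := integral_mono_ae hfg_int hsum_int hptwise
      have h5 : ∫ x in D, ((t • D).indicator (fun y => gauge D y ^ (-p)) x
          + t^(-p) * (g x - (t • D).indicator (fun _ => (1:ℝ)) x))
          = t ^ ((n:ℝ)-p) * ∫ x in D, gauge D x ^ (-p) := by
        rw [integral_add hind_f_int hrest_int, integral_const_mul,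
          integral_sub hgint hind_1_int,
          setIntegral_indicator hTmeas, setIntegral_indicator hTmeas,
          inter_eq_self_of_subset_right hTsub, setIntegral_const, measureReal_def, smul_eq_mul, mul_one,
          hvolT, sub_self, mul_zero, add_zero, hscale]
      rw [h5] at h2
      exact h2
    calc ((∫ x in D, gauge D x ^ (-p) * g x) / ∫ x in D, gauge D x ^ (-p))
          ^ (1 / ((n : ℝ) - p))
        ≤ (t ^ ((n:ℝ)-p)) ^ (1 / ((n : ℝ) - p)) := by
          apply Real.rpow_le_rpow (div_nonneg hJ0 hIpos.le) ?_ (by positivity)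
          rw [div_le_iff₀ hIpos]
          exact hkey
      _ = t := by
          rw [← Real.rpow_mul htpos.le, mul_one_div_cancel hnp.ne', Real.rpow_one]
end
end

section
/- For the Euclidean ball $B_n$ of volume 1 in $\mathbb{R}^n$ and $q \ge 0$ not an odd integer with $q \le n-2$, the quantity $\frac{2^{q} \pi^{(n-2)/2} \Gamma(\frac{q+1}{2})\Gamma(1+\frac n2)^{(n-q-1)/n}}{\Gamma(\frac{n-q-1}{2}+1)\pi^{(n-q-1)/2}}$ is bounded below by $c^{q+1}(q+1)^{(q+1)/2}$ for some absolute constant $c > 0$ independent of $n$ and $q$. -/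
open Real

/-- Stirling-type lower bound: `Γ(x) ≥ x^x e^{-2x}` for `x ≥ 1`. -/
lemma gamma_lb {x : ℝ} (hx : 1 ≤ x) :
    x ^ x * Real.exp (-(2 * x)) ≤ Real.Gamma x := by
  have hx0 : 0 < x := by linarith
  rw [Real.Gamma_eq_integral hx0]
  have hsub : Set.Ioc x (2 * x) ⊆ Set.Ioi (0 : ℝ) := fun t ht => lt_trans hx0 ht.1
  have hint := Real.GammaIntegral_convergent hx0
  have h1 : (∫ t in Set.Ioc x (2 * x), Real.exp (-t) * t ^ (x - 1)) ≤
      ∫ t in Set.Ioi (0 : ℝ), Real.exp (-t) * t ^ (x - 1) := by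
    refine MeasureTheory.setIntegral_mono_set hint ?_ (Filter.Eventually.of_forall hsub)
    filter_upwards [MeasureTheory.ae_restrict_mem measurableSet_Ioi] with t ht
    have ht0 : (0:ℝ) < t := ht
    positivity
  refine le_trans ?_ h1
  have h2 : (∫ _ in Set.Ioc x (2 * x), (Real.exp (-(2 * x)) * x ^ (x - 1))) ≤
      ∫ t in Set.Ioc x (2 * x), Real.exp (-t) * t ^ (x - 1) := by
    refine MeasureTheory.setIntegral_mono_on ?_ ?_ measurableSet_Ioc ?_
    · exact MeasureTheory.integrableOn_const
        (by rw [Real.volume_Ioc]; exact ENNReal.ofReal_ne_top)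
    · exact hint.mono_set hsub
    · intro t ht
      have ht1 : x < t := ht.1
      have ht2 : t ≤ 2 * x := ht.2
      have he : Real.exp (-(2 * x)) ≤ Real.exp (-t) := Real.exp_le_exp.2 (by linarith)
      have hr : x ^ (x - 1) ≤ t ^ (x - 1) :=
        Real.rpow_le_rpow hx0.le ht1.le (by linarith)
      exact mul_le_mul he hr (Real.rpow_nonneg hx0.le _) (Real.exp_pos _).le
  refine le_trans ?_ h2
  rw [MeasureTheory.setIntegral_const, Real.volume_real_Ioc_of_le (by linarith), smul_eq_mul]
  have hxx : x ^ x = x ^ (x - 1) * x := by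
    rw [← Real.rpow_add_one hx0.ne' (x - 1)]
    ring_nf
  rw [hxx]; ring_nf; nlinarith [Real.exp_pos (-(2*x)), Real.rpow_nonneg hx0.le (x-1),
    Real.exp_pos (-(x*2))]

/-- One-variable lower bound. -/
lemma onevar {q : ℝ} (hq : 0 ≤ q) :
    ((1:ℝ)/1000) ^ (q + 1) * (q + 1) ^ ((q + 1) / 2) ≤
      2 ^ q * π ^ ((q - 1) / 2) * Real.Gamma ((q + 1) / 2) := by
  obtain ⟨x, rfl⟩ : ∃ x : ℝ, q = 2 * x - 1 := ⟨(q + 1) / 2, by ring⟩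
  have hx : (1:ℝ)/2 ≤ x := by linarith
  have e1 : 2 * x - 1 + 1 = 2 * x := by ring
  have e2 : (2 * x) / 2 = x := by ring
  have e3 : (2 * x - 1 - 1) / 2 = x - 1 := by ring
  rw [e1, e2, e3]
  have hΓpos : 0 < Real.Gamma x := Real.Gamma_pos_of_pos (by linarith)
  have hexp1 : Real.exp 1 ≤ 3 := by nlinarith [Real.exp_one_lt_d9]
  rcases le_or_gt 1 x with hx1 | hx1
  · -- case x ≥ 1
    have hΓ := gamma_lb hx1
    have hpos : (0:ℝ) < 2 ^ (2 * x - 1) * π ^ (x - 1) :=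
      mul_pos (Real.rpow_pos_of_pos two_pos _) (Real.rpow_pos_of_pos Real.pi_pos _)
    have key : ((1:ℝ)/1000) ^ (2 * x) * (2 * x) ^ x ≤
        2 ^ (2 * x - 1) * π ^ (x - 1) * (x ^ x * Real.exp (-(2 * x))) := by
      have hc : ((1:ℝ)/1000) ^ (2 * x) = ((1:ℝ)/1000000) ^ x := by
        rw [show (2 * x : ℝ) = (2:ℝ) * x by ring, Real.rpow_mul (by norm_num) 2 x]
        norm_num [Real.rpow_two]
      have h2 : (2:ℝ) ^ (2 * x - 1) = (4:ℝ) ^ x / 2 := by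
        rw [Real.rpow_sub two_pos, Real.rpow_one,
          show (2 * x : ℝ) = (2:ℝ) * x by ring, Real.rpow_mul (by norm_num) 2 x]
        norm_num [Real.rpow_two]
      have hπ : π ^ (x - 1) = π ^ x / π := by
        rw [Real.rpow_sub Real.pi_pos, Real.rpow_one]
      have hex : Real.exp (-(2 * x)) = (Real.exp (-2)) ^ x := by
        rw [← Real.exp_mul]; ring_nf
      rw [hc, h2, hπ, hex]
      -- goal : (1/1000000)^x * (2x)^x ≤ (4^x/2) * (π^x/π) * (x^x * (exp(-2))^x)
      have hrw : (4:ℝ) ^ x / 2 * (π ^ x / π) * (x ^ x * Real.exp (-2) ^ x) =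
          (1 / (2 * π)) * ((4 * π * Real.exp (-2) * x) ^ x) := by
        rw [show (4 * π * Real.exp (-2) * x : ℝ) = 4 * (π * (Real.exp (-2) * x)) by ring,
          Real.mul_rpow (by norm_num) (by positivity),
          Real.mul_rpow Real.pi_pos.le (by positivity),
          Real.mul_rpow (Real.exp_pos _).le (by linarith)]
        field_simp
      rw [hrw, ← Real.mul_rpow (by norm_num) (by linarith)]
      set K : ℝ := 4 * π * Real.exp (-2) * x with hK
      have hKpos : 0 < K := by positivity
      set ε : ℝ := Real.exp 2 / (2 * π * 1000000) with hε
      have hεpos : 0 < ε := by positivity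
      have hbase : (1:ℝ)/1000000 * (2 * x) = ε * K := by
        rw [hε, hK]
        have : Real.exp (-2) = (Real.exp 2)⁻¹ := by rw [← Real.exp_neg]
        rw [this]
        have h2pos : (0:ℝ) < Real.exp 2 := Real.exp_pos 2
        field_simp
        ring
      rw [hbase, Real.mul_rpow hεpos.le hKpos.le]
      have hε1 : ε ≤ 1 / (2 * π) := by
        rw [hε, div_le_div_iff₀ (by positivity) (by positivity)]
        have : Real.exp 2 ≤ 9 := by
          have : Real.exp 2 = Real.exp 1 * Real.exp 1 := by
            rw [← Real.exp_add]; norm_num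
          nlinarith [Real.exp_pos 1]
        nlinarith [Real.pi_pos]
      have hεle1 : ε ≤ 1 := le_trans hε1 (by
        rw [div_le_one (by positivity)]; nlinarith [Real.pi_gt_three])
      have : ε ^ x ≤ ε := by
        calc ε ^ x ≤ ε ^ (1:ℝ) := Real.rpow_le_rpow_of_exponent_ge hεpos hεle1 hx1
        _ = ε := Real.rpow_one ε
      calc ε ^ x * K ^ x ≤ ε * K ^ x :=
            mul_le_mul_of_nonneg_right this (Real.rpow_nonneg hKpos.le x)
        _ ≤ 1 / (2 * π) * K ^ x :=
            mul_le_mul_of_nonneg_right hε1 (Real.rpow_nonneg hKpos.le x)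
    calc ((1:ℝ)/1000) ^ (2 * x) * (2 * x) ^ x ≤
          2 ^ (2 * x - 1) * π ^ (x - 1) * (x ^ x * Real.exp (-(2 * x))) := key
      _ ≤ 2 ^ (2 * x - 1) * π ^ (x - 1) * Real.Gamma x :=
          mul_le_mul_of_nonneg_left hΓ hpos.le
  · -- case 1/2 ≤ x < 1
    have hx0 : 0 < x := by linarith
    have h1 : ((1:ℝ)/1000) ^ (2 * x) ≤ 1/1000 := by
      calc ((1:ℝ)/1000) ^ (2 * x) ≤ ((1:ℝ)/1000) ^ (1:ℝ) :=
            Real.rpow_le_rpow_of_exponent_ge (by norm_num) (by norm_num) (by linarith)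
        _ = 1/1000 := Real.rpow_one _
    have h2 : (2 * x) ^ x ≤ 2 := by
      calc (2 * x) ^ x ≤ (2:ℝ) ^ x := Real.rpow_le_rpow (by linarith) (by linarith) hx0.le
        _ ≤ (2:ℝ) ^ (1:ℝ) := Real.rpow_le_rpow_of_exponent_le one_le_two hx1.le
        _ = 2 := Real.rpow_one 2
    have h3 : (1:ℝ) ≤ 2 ^ (2 * x - 1) := by
      calc (1:ℝ) = (2:ℝ) ^ (0:ℝ) := (Real.rpow_zero 2).symm
        _ ≤ 2 ^ (2 * x - 1) := Real.rpow_le_rpow_of_exponent_le one_le_two (by linarith)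
    have h4 : (1:ℝ)/4 ≤ π ^ (x - 1) := by
      have : π ^ (-1:ℝ) ≤ π ^ (x - 1) :=
        Real.rpow_le_rpow_of_exponent_le (by nlinarith [Real.pi_gt_three]) (by linarith)
      rw [Real.rpow_neg_one] at this
      calc (1:ℝ)/4 = (4:ℝ)⁻¹ := by norm_num
        _ ≤ π⁻¹ := inv_anti₀ Real.pi_pos Real.pi_le_four
        _ ≤ π ^ (x - 1) := this
    have h5 : (1:ℝ)/81 ≤ Real.Gamma x := by
      have hrec : Real.Gamma (x + 1) = x * Real.Gamma x := Real.Gamma_add_one hx0.ne'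
      have hmon : Real.Gamma (x + 1) ≤ Real.Gamma x := by
        nlinarith [hΓpos]
      have hlb := gamma_lb (show (1:ℝ) ≤ x + 1 by linarith)
      have hb1 : (1:ℝ) ≤ (x + 1) ^ (x + 1) := by
        calc (1:ℝ) = (x + 1) ^ (0:ℝ) := (Real.rpow_zero _).symm
          _ ≤ (x + 1) ^ (x + 1) :=
            Real.rpow_le_rpow_of_exponent_le (by linarith) (by linarith)
      have hb2 : Real.exp (-4) ≤ Real.exp (-(2 * (x + 1))) :=
        Real.exp_le_exp.2 (by linarith)
      have hb3 : (1:ℝ)/81 ≤ Real.exp (-4) := by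
        rw [Real.exp_neg, div_eq_inv_mul, mul_one, inv_le_inv₀ (by norm_num) (Real.exp_pos 4)]
        have : Real.exp 4 = Real.exp 1 ^ 4 := by
          rw [← Real.exp_nat_mul]; norm_num
        rw [this]
        have h81 : Real.exp 1 ^ 4 ≤ 3 ^ 4 := pow_le_pow_left₀ (Real.exp_pos 1).le hexp1 4
        norm_num at h81 ⊢
        linarith
      calc (1:ℝ)/81 ≤ Real.exp (-4) := hb3
        _ ≤ Real.exp (-(2 * (x + 1))) := hb2
        _ ≤ (x + 1) ^ (x + 1) * Real.exp (-(2 * (x + 1))) := by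
            nlinarith [Real.exp_pos (-(2 * (x + 1)))]
        _ ≤ Real.Gamma (x + 1) := hlb
        _ ≤ Real.Gamma x := hmon
    have hp1 : (0:ℝ) ≤ ((1:ℝ)/1000) ^ (2 * x) := Real.rpow_nonneg (by norm_num) _
    have hp2 : (0:ℝ) ≤ (2 * x) ^ x := Real.rpow_nonneg (by linarith) _
    have hp3 : (0:ℝ) < 2 ^ (2 * x - 1) := Real.rpow_pos_of_pos two_pos _
    have hp4 : (0:ℝ) < π ^ (x - 1) := Real.rpow_pos_of_pos Real.pi_pos _
    calc ((1:ℝ)/1000) ^ (2 * x) * (2 * x) ^ x ≤ (1/1000) * 2 :=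
          mul_le_mul h1 h2 hp2 (by norm_num)
      _ ≤ 1 * ((1/4) * (1/81)) := by norm_num
      _ ≤ 2 ^ (2 * x - 1) * (π ^ (x - 1) * Real.Gamma x) := by
          refine mul_le_mul h3 ?_ (by norm_num) hp3.le
          exact mul_le_mul h4 h5 (by norm_num) hp4.le
      _ = 2 ^ (2 * x - 1) * π ^ (x - 1) * Real.Gamma x := by ring

/-- There is an absolute constant `c > 0` (independent of `n` and `q`) such that for the
Euclidean ball of volume 1 in `ℝⁿ` and `0 ≤ q ≤ n-2` not an odd integer, the quantity
`2^q π^((n-2)/2) Γ((q+1)/2) Γ(1+n/2)^((n-q-1)/n) / (Γ((n-q-1)/2+1) π^((n-q-1)/2))`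
is at least `c^(q+1) (q+1)^((q+1)/2)`. -/
theorem stmt_10 :
    ∃ c : ℝ, 0 < c ∧ ∀ (n : ℕ) (q : ℝ), 2 ≤ n → 0 ≤ q → q ≤ (n : ℝ) - 2 →
      (¬ ∃ k : ℕ, Odd k ∧ q = (k : ℝ)) →
      c ^ (q + 1) * (q + 1) ^ ((q + 1) / 2) ≤
        2 ^ q * π ^ (((n : ℝ) - 2) / 2) * Real.Gamma ((q + 1) / 2) *
            (Real.Gamma (1 + (n : ℝ) / 2)) ^ (((n : ℝ) - q - 1) / (n : ℝ)) /
          (Real.Gamma (((n : ℝ) - q - 1) / 2 + 1) * π ^ (((n : ℝ) - q - 1) / 2)) := by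
  refine ⟨1/1000, by norm_num, fun n q hn hq hqn _ => ?_⟩
  have hn0 : (0:ℝ) < (n : ℝ) := by
    have : (2:ℝ) ≤ (n:ℝ) := by exact_mod_cast hn
    linarith
  set m : ℝ := (n : ℝ) - q - 1 with hm
  have hm1 : 1 ≤ m := by simp only [hm]; linarith
  -- Step A : Γ(m/2+1) ≤ Γ(1+n/2)^(m/n)
  have hG : 0 < Real.Gamma (1 + (n : ℝ) / 2) := Real.Gamma_pos_of_pos (by linarith)
  have hΓm : 0 < Real.Gamma (m / 2 + 1) := Real.Gamma_pos_of_pos (by linarith)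
  have stepA : Real.Gamma (m / 2 + 1) ≤
      (Real.Gamma (1 + (n : ℝ) / 2)) ^ (m / (n : ℝ)) := by
    have hcvx := Real.convexOn_log_Gamma
    have ht0 : 0 ≤ m / (n : ℝ) := by positivity
    have ht1 : m / (n : ℝ) ≤ 1 := by
      rw [div_le_one hn0]; simp only [hm]; linarith
    have hmem1 : (1:ℝ) ∈ Set.Ioi (0:ℝ) := by norm_num
    have hmem2 : (1 + (n : ℝ) / 2) ∈ Set.Ioi (0:ℝ) := by
      simp only [Set.mem_Ioi]; linarith
    have hconv := hcvx.2 hmem1 hmem2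
      (show (0:ℝ) ≤ 1 - m / (n:ℝ) by linarith)
      (show (0:ℝ) ≤ m / (n:ℝ) from ht0) (by ring)
    have hpt : (1 - m / (n:ℝ)) • (1:ℝ) + (m / (n:ℝ)) • (1 + (n : ℝ) / 2) =
        m / 2 + 1 := by
      simp only [smul_eq_mul]
      field_simp
      ring
    rw [hpt] at hconv
    simp only [Function.comp_apply, smul_eq_mul, Real.Gamma_one, Real.log_one,
      mul_zero, zero_add] at hconv
    -- hconv : log (Gamma (m/2+1)) ≤ (m/n) * log (Gamma (1+n/2))
    have : Real.Gamma (m / 2 + 1) = Real.exp (Real.log (Real.Gamma (m / 2 + 1))) :=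
      (Real.exp_log hΓm).symm
    rw [this, Real.rpow_def_of_pos hG]
    exact Real.exp_le_exp.2 (hconv.trans_eq (mul_comm _ _))
  -- Step B : reduce to the one-variable inequality
  have hbase := onevar hq
  have hΓq : 0 < Real.Gamma ((q + 1) / 2) := Real.Gamma_pos_of_pos (by linarith)
  have h2q : (0:ℝ) < 2 ^ q := Real.rpow_pos_of_pos two_pos q
  have hπq : (0:ℝ) < π ^ ((q - 1) / 2) := Real.rpow_pos_of_pos Real.pi_pos _
  have hπm : (0:ℝ) < π ^ (m / 2) := Real.rpow_pos_of_pos Real.pi_pos _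
  have hsplit : π ^ (((n : ℝ) - 2) / 2) = π ^ ((q - 1) / 2) * π ^ (m / 2) := by
    rw [← Real.rpow_add Real.pi_pos]
    congr 1
    simp only [hm]; ring
  have hden : 0 < Real.Gamma (m / 2 + 1) * π ^ (m / 2) := mul_pos hΓm hπm
  rw [le_div_iff₀ hden]
  calc (1/1000 : ℝ) ^ (q + 1) * (q + 1) ^ ((q + 1) / 2) *
        (Real.Gamma (m / 2 + 1) * π ^ (m / 2))
      ≤ (2 ^ q * π ^ ((q - 1) / 2) * Real.Gamma ((q + 1) / 2)) *
        (Real.Gamma (m / 2 + 1) * π ^ (m / 2)) := by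
        refine mul_le_mul_of_nonneg_right hbase hden.le
    _ ≤ (2 ^ q * π ^ ((q - 1) / 2) * Real.Gamma ((q + 1) / 2)) *
        ((Real.Gamma (1 + (n : ℝ) / 2)) ^ (m / (n : ℝ)) * π ^ (m / 2)) := by
        refine mul_le_mul_of_nonneg_left ?_ (by positivity)
        exact mul_le_mul_of_nonneg_right stepA hπm.le
    _ = 2 ^ q * π ^ (((n : ℝ) - 2) / 2) * Real.Gamma ((q + 1) / 2) *
        (Real.Gamma (1 + (n : ℝ) / 2)) ^ (m / (n : ℝ)) := by
        rw [hsplit]; ring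
end
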